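/- For every integer n ≥ 1, D^{n}(a) = a·x·y^{n}·w^{n−1} · ∑_{k=0}^{n−1} Q_{n,k}(x·w^{−1}) · y^{k}, as an identity in the field K, where Q_{n,k}(x·w^{−1}) denotes the evaluation of the polynomial Q_{n,k} at the element x·w^{−1} ∈ K. -/

import Mathlib

set_option maxHeartbeats 1000000


open Polynomial

/-- The Ramanujan–Shor polynomials `Q n k ∈ ℚ[x]`. -/
noncomputable def ramanujanShorQ : ℕ → ℤ → Polynomial ℚ
  | 0, _ => 0
  | 1, k => if k = 0 then 1 else 0
  | (n + 2), k =>
      if 0 ≤ k ∧ k ≤ (n : ℤ) + 1 then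
        (Polynomial.X + Polynomial.C ((n : ℚ) + 1)) * ramanujanShorQ (n + 1) k
          + Polynomial.C (((n : ℤ) + k : ℤ) : ℚ) * ramanujanShorQ (n + 1) (k - 1)
      else 0

/-- The images of the four variables `a, x, y, w` in the fraction field of `ℚ[a,x,y,w]`. -/
noncomputable def gv (i : Fin 4) : FractionRing (MvPolynomial (Fin 4) ℚ) :=
  algebraMap (MvPolynomial (Fin 4) ℚ) (FractionRing (MvPolynomial (Fin 4) ℚ)) (MvPolynomial.X i)

lemma Q_neg (n : ℕ) (k : ℤ) (hk : k < 0) : ramanujanShorQ n k = 0 := by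
  match n with
  | 0 => rfl
  | 1 => rw [ramanujanShorQ, if_neg (by omega)]
  | (n+2) => rw [ramanujanShorQ, if_neg (by omega)]

lemma Q_ge (n : ℕ) (k : ℤ) (hk : (n:ℤ) ≤ k) : ramanujanShorQ n k = 0 := by
  match n with
  | 0 => rfl
  | 1 => rw [ramanujanShorQ, if_neg (by omega)]
  | (n+2) => rw [ramanujanShorQ, if_neg (by omega)]

lemma Q_rec (m : ℕ) (k : ℤ) (h0 : 0 ≤ k) (h1 : k ≤ (m:ℤ) + 1) :
    ramanujanShorQ (m+2) k = (Polynomial.X + Polynomial.C ((m : ℚ) + 1)) * ramanujanShorQ (m + 1) k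
          + Polynomial.C (((m : ℤ) + k : ℤ) : ℚ) * ramanujanShorQ (m + 1) (k - 1) := by
  rw [ramanujanShorQ, if_pos ⟨h0, h1⟩]

lemma gv_ne_zero (i : Fin 4) : gv i ≠ 0 := by
  simp only [gv, ne_eq, IsFractionRing.to_map_eq_zero_iff]
  exact MvPolynomial.X_ne_zero i

theorem dn_a_key (D : Derivation ℚ (FractionRing (MvPolynomial (Fin 4) ℚ))
      (FractionRing (MvPolynomial (Fin 4) ℚ)))
    (hDa : D (gv 0) = gv 0 * gv 1 * gv 2)
    (hDx : D (gv 1) = gv 1 * gv 2 * gv 3)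
    (hDy : D (gv 2) = (gv 2) ^ 3 * gv 3)
    (hDw : D (gv 3) = gv 2 * (gv 3) ^ 2)
    (m : ℕ) :
    (⇑D)^[m + 1] (gv 0)
      = gv 0 * gv 1 * (gv 2) ^ (m + 1) * (gv 3) ^ m
        * ∑ k ∈ Finset.range (m + 1),
            Polynomial.aeval (gv 1 * (gv 3)⁻¹) (ramanujanShorQ (m + 1) (k : ℤ)) * (gv 2) ^ k := by
  set K := FractionRing (MvPolynomial (Fin 4) ℚ)
  set t : K := gv 1 * (gv 3)⁻¹ with ht
  have hw : gv 3 ≠ 0 := gv_ne_zero 3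
  have hDt : D t = 0 := by
    rw [ht, Derivation.leibniz, Derivation.leibniz_inv, hDx, hDw, smul_eq_mul, smul_eq_mul,
      smul_eq_mul]
    field_simp
    ring
  have hconst : ∀ P : Polynomial ℚ, D (Polynomial.aeval t P) = 0 := by
    intro P
    rw [Derivation.map_aeval, hDt, smul_zero]
  have hX : gv 1 = t * gv 3 := by
    rw [ht]; field_simp
  -- derivative of powers
  have hDyp : ∀ j : ℕ, D ((gv 2) ^ j) = (j : K) * ((gv 2) ^ (j + 2) * gv 3) := by
    intro j
    induction j with
    | zero => simp
    | succ j ih =>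
      rw [pow_succ, Derivation.leibniz, ih, hDy, smul_eq_mul, smul_eq_mul]
      push_cast; ring
  have hDwp : ∀ j : ℕ, D ((gv 3) ^ j) = (j : K) * (gv 2 * (gv 3) ^ (j + 1)) := by
    intro j
    induction j with
    | zero => simp
    | succ j ih =>
      rw [pow_succ, Derivation.leibniz, ih, hDw, smul_eq_mul, smul_eq_mul]
      push_cast; ring
  induction m with
  | zero =>
    have h1 : ramanujanShorQ 1 0 = 1 := by simp [ramanujanShorQ]
    simp [Finset.sum_range_one, h1, hDa]
  | succ m ih =>
    rw [Function.iterate_succ_apply', ih]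
    have hterm : ∀ j : ℕ, ∀ c : K, D c = 0 →
        D (c * (gv 0 * gv 1 * (gv 2) ^ j * (gv 3) ^ m)) =
        c * (gv 0 * gv 1 * (gv 2) ^ j * (gv 3) ^ m) *
          (gv 1 * gv 2 + gv 2 * gv 3 + (j : K) * ((gv 2) ^ 2 * gv 3) + (m : K) * (gv 2 * gv 3)) := by
      intro j c hc
      rw [Derivation.leibniz, hc, smul_zero, add_zero, smul_eq_mul,
        Derivation.leibniz, Derivation.leibniz, Derivation.leibniz,
        hDa, hDx, hDyp, hDwp]
      simp only [smul_eq_mul]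
      ring
    have hsplit : ∀ k : ℕ, k < m + 2 →
        Polynomial.aeval t (ramanujanShorQ (m + 2) (k : ℤ)) =
        (t + ((m : K) + 1)) * Polynomial.aeval t (ramanujanShorQ (m + 1) (k : ℤ))
          + ((m : K) + (k : K)) * Polynomial.aeval t (ramanujanShorQ (m + 1) ((k : ℤ) - 1)) := by
      intro k hk
      rw [Q_rec m k (Int.natCast_nonneg k) (by exact_mod_cast Nat.lt_succ_iff.mp hk)]
      simp only [map_add, map_mul, Polynomial.aeval_X, Polynomial.aeval_C, map_one, map_natCast,
        map_intCast, Int.cast_add, Int.cast_natCast]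
    have hLHS : D (gv 0 * gv 1 * (gv 2) ^ (m + 1) * (gv 3) ^ m
        * ∑ k ∈ Finset.range (m + 1),
            Polynomial.aeval t (ramanujanShorQ (m + 1) (k : ℤ)) * (gv 2) ^ k)
      = ∑ k ∈ Finset.range (m + 1),
          Polynomial.aeval t (ramanujanShorQ (m + 1) (k : ℤ)) *
            (gv 0 * gv 1 * (gv 2) ^ (m + 1 + k) * (gv 3) ^ m) *
            (gv 1 * gv 2 + gv 2 * gv 3 + ((m : K) + 1 + (k : K)) * ((gv 2) ^ 2 * gv 3)
              + (m : K) * (gv 2 * gv 3)) := by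
      rw [show gv 0 * gv 1 * (gv 2) ^ (m + 1) * (gv 3) ^ m
          * ∑ k ∈ Finset.range (m + 1),
              Polynomial.aeval t (ramanujanShorQ (m + 1) (k : ℤ)) * (gv 2) ^ k
        = ∑ k ∈ Finset.range (m + 1),
            Polynomial.aeval t (ramanujanShorQ (m + 1) (k : ℤ)) *
              (gv 0 * gv 1 * (gv 2) ^ (m + 1 + k) * (gv 3) ^ m) by
          rw [Finset.mul_sum]
          exact Finset.sum_congr rfl fun k _ => by rw [pow_add]; ring]
      rw [map_sum]
      refine Finset.sum_congr rfl fun k _ => ?_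
      rw [hterm (m + 1 + k) _ (hconst _)]
      push_cast
      ring
    rw [hLHS]
    have hsum : ∑ k ∈ Finset.range (m + 2),
        Polynomial.aeval t (ramanujanShorQ (m + 2) (k : ℤ)) * (gv 2) ^ k
      = ∑ k ∈ Finset.range (m + 1),
          Polynomial.aeval t (ramanujanShorQ (m + 1) (k : ℤ)) *
            ((t + ((m : K) + 1)) * (gv 2) ^ k + ((m : K) + 1 + (k : K)) * (gv 2) ^ (k + 1)) := by
      calc ∑ k ∈ Finset.range (m + 2),
            Polynomial.aeval t (ramanujanShorQ (m + 2) (k : ℤ)) * (gv 2) ^ k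
          = ∑ k ∈ Finset.range (m + 2),
              ((t + ((m : K) + 1)) * Polynomial.aeval t (ramanujanShorQ (m + 1) (k : ℤ))
                  * (gv 2) ^ k
                + ((m : K) + (k : K))
                  * Polynomial.aeval t (ramanujanShorQ (m + 1) ((k : ℤ) - 1)) * (gv 2) ^ k) := by
            refine Finset.sum_congr rfl fun k hk => ?_
            rw [hsplit k (Finset.mem_range.mp hk)]
            ring
        _ = (∑ k ∈ Finset.range (m + 2),
              (t + ((m : K) + 1)) * Polynomial.aeval t (ramanujanShorQ (m + 1) (k : ℤ))
                * (gv 2) ^ k)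
            + ∑ k ∈ Finset.range (m + 2),
              ((m : K) + (k : K))
                * Polynomial.aeval t (ramanujanShorQ (m + 1) ((k : ℤ) - 1)) * (gv 2) ^ k := by
            rw [Finset.sum_add_distrib]
        _ = (∑ k ∈ Finset.range (m + 1),
              (t + ((m : K) + 1)) * Polynomial.aeval t (ramanujanShorQ (m + 1) (k : ℤ))
                * (gv 2) ^ k)
            + ∑ k ∈ Finset.range (m + 1),
              ((m : K) + 1 + (k : K))
                * Polynomial.aeval t (ramanujanShorQ (m + 1) (k : ℤ)) * (gv 2) ^ (k + 1) := by
            congr 1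
            · rw [Finset.sum_range_succ, Q_ge (m + 1) ((m + 1 : ℕ) : ℤ) (by push_cast; omega)]
              simp
            · rw [Finset.sum_range_succ']
              rw [show ((0 : ℕ) : ℤ) - 1 = -1 by norm_num, Q_neg (m + 1) (-1) (by omega)]
              simp only [map_zero, zero_mul, mul_zero, add_zero, pow_zero, mul_one]
              refine Finset.sum_congr rfl fun k _ => ?_
              rw [show ((k + 1 : ℕ) : ℤ) - 1 = (k : ℤ) by push_cast; ring]
              push_cast
              ring
        _ = _ := by
            rw [← Finset.sum_add_distrib]
            exact Finset.sum_congr rfl fun k _ => by ring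
    rw [show m + 1 + 1 = m + 2 from rfl, hsum, Finset.mul_sum]
    refine Finset.sum_congr rfl fun k _ => ?_
    rw [hX]
    ring

theorem dn_a (D : Derivation ℚ (FractionRing (MvPolynomial (Fin 4) ℚ))
      (FractionRing (MvPolynomial (Fin 4) ℚ)))
    (hDa : D (gv 0) = gv 0 * gv 1 * gv 2)
    (hDx : D (gv 1) = gv 1 * gv 2 * gv 3)
    (hDy : D (gv 2) = (gv 2) ^ 3 * gv 3)
    (hDw : D (gv 3) = gv 2 * (gv 3) ^ 2)
    (n : ℕ) (hn : 1 ≤ n) :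
    (⇑D)^[n] (gv 0)
      = gv 0 * gv 1 * (gv 2) ^ n * (gv 3) ^ (n - 1)
        * ∑ k ∈ Finset.range n,
            Polynomial.aeval (gv 1 * (gv 3)⁻¹) (ramanujanShorQ n (k : ℤ)) * (gv 2) ^ k := by
  obtain ⟨m, rfl⟩ : ∃ m, n = m + 1 := ⟨n - 1, by omega⟩
  simpa using dn_a_key D hDa hDx hDy hDw m
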